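/- Let n, k, m be positive integers and let P = (P_{ij}) (1 ≤ i ≤ m, 1 ≤ j ≤ k) be a profile with m rows and entries in {1,…,n} which is weakly column decreasing. Then P is canonical if and only if any two rows of P, regarded as k-element subsets of {1,…,n}, are interlacing. -/

import Mathlib

open scoped Classical

noncomputable section

namespace GCC

/-- `a₁ < b₁ < a₂ < b₂ < ⋯ < a_r < b_r` for sorted lists `a`, `b` of equal length `r`. -/
def AltChain (a b : List ℕ) : Prop :=
  (∀ i, i < a.length → a.getD i 0 < b.getD i 0) ∧
  (∀ i, i + 1 < a.length → b.getD i 0 < a.getD (i + 1) 0)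

/-- Two finite sets of naturals are interlacing, i.e. `r`-interlacing for some
`r ≥ 0`: the sorted lists of `J1∖J2` and `J2∖J1` have the same length and
alternate (in one of the two possible ways). -/
def Interlacing (J1 J2 : Finset ℕ) : Prop :=
  (J1 \ J2).card = (J2 \ J1).card ∧
  (AltChain ((J1 \ J2).sort (· ≤ ·)) ((J2 \ J1).sort (· ≤ ·)) ∨
   AltChain ((J2 \ J1).sort (· ≤ ·)) ((J1 \ J2).sort (· ≤ ·)))

/-! ### Auxiliary counting machinery -/

/-- The number of elements of `A` that are `≤ t`. -/
def cnt (A : Finset ℕ) (t : ℕ) : ℕ := (A.filter (· ≤ t)).card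

lemma cnt_eq_countP (A : Finset ℕ) (t : ℕ) :
    cnt A t = (A.sort (· ≤ ·)).countP (fun x => x ≤ t) := by
  have h1 : (A.sort (· ≤ ·)).countP (fun x => x ≤ t)
      = A.toList.countP (fun x => x ≤ t) :=
    (Finset.sort_perm_toList (s := A) (r := (· ≤ ·))).countP_eq _
  rw [h1, cnt, Finset.card_def, Finset.filter_val,
      ← Multiset.countP_eq_card_filter, ← Finset.coe_toList A, Multiset.coe_countP]

lemma cnt_le_card (A : Finset ℕ) (t : ℕ) : cnt A t ≤ A.card :=
  Finset.card_filter_le _ _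

lemma sorted_getD_le_iff (l : List ℕ) (hl : l.Pairwise (· ≤ ·)) :
    ∀ i t, i < l.length → (l.getD i 0 ≤ t ↔ i + 1 ≤ l.countP (fun x => x ≤ t)) := by
  induction l with
  | nil => intro i t hi; simp at hi
  | cons x xs ih =>
    intro i t hi
    have hx : ∀ y ∈ xs, x ≤ y := fun y hy => (List.pairwise_cons.mp hl).1 y hy
    have hxs : xs.Pairwise (· ≤ ·) := (List.pairwise_cons.mp hl).2
    rw [List.countP_cons]
    cases i with
    | zero =>
      simp only [List.getD_cons_zero]
      constructor
      · intro h
        simp [h]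
      · intro h
        by_contra hxt
        push_neg at hxt
        have h0 : xs.countP (fun y => y ≤ t) = 0 := by
          apply List.countP_eq_zero.mpr
          intro y hy
          simp only [decide_eq_true_eq]
          exact fun hyt => absurd (le_trans (hx y hy) hyt) (not_le.mpr hxt)
        rw [h0] at h
        simp [not_le.mpr hxt] at h
    | succ i =>
      simp only [List.getD_cons_succ]
      have hi' : i < xs.length := by simpa using hi
      have hmem : xs.getD i 0 ∈ xs := by
        rw [List.getD_eq_getElem _ _ hi']
        exact List.getElem_mem _
      by_cases hxt : x ≤ t
      · have hone : (if (fun y => decide (y ≤ t)) x = true then 1 else 0) = 1 := by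
          simp [hxt]
        rw [hone, ih hxs i t hi']
        omega
      · have h0 : xs.countP (fun y => y ≤ t) = 0 := by
          apply List.countP_eq_zero.mpr
          intro y hy
          simp only [decide_eq_true_eq]
          intro hyt
          exact hxt (le_trans (hx y hy) hyt)
        have hzero : (if (fun y => decide (y ≤ t)) x = true then 1 else 0) = 0 := by
          simp [hxt]
        rw [h0, hzero]
        constructor
        · intro hcontra
          exact absurd (le_trans (hx _ hmem) hcontra) hxt
        · omega

lemma sort_getD_le_iff (A : Finset ℕ) {i : ℕ} (t : ℕ) (hi : i < A.card) :
    ((A.sort (· ≤ ·)).getD i 0 ≤ t ↔ i + 1 ≤ cnt A t) := by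
  rw [cnt_eq_countP]
  exact sorted_getD_le_iff _ (Finset.pairwise_sort (s := A) (r := (· ≤ ·))) i t
    (by rwa [Finset.length_sort])

lemma sort_getD_mem (A : Finset ℕ) {i : ℕ} (hi : i < A.card) :
    (A.sort (· ≤ ·)).getD i 0 ∈ A := by
  have hl : i < (A.sort (· ≤ ·)).length := by rwa [Finset.length_sort]
  rw [List.getD_eq_getElem _ _ hl]
  exact Finset.mem_sort _ |>.mp (List.getElem_mem _)

/-- Master lemma: alternation of two disjoint equal-size finsets is equivalent
to a counting condition. -/
lemma altChain_iff (A B : Finset ℕ) (hd : Disjoint A B) (hc : A.card = B.card) :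
    AltChain (B.sort (· ≤ ·)) (A.sort (· ≤ ·)) ↔
      ∀ t, cnt A t ≤ cnt B t ∧ cnt B t ≤ cnt A t + 1 := by
  constructor
  · rintro ⟨h1, h2⟩ t
    constructor
    · by_contra h
      push_neg at h
      set s := cnt B t with hs
      have hsA : s + 1 ≤ cnt A t := h
      have hsrA : s < A.card := lt_of_lt_of_le (by omega) (cnt_le_card A t)
      have hsrB : s < B.card := by omega
      have hsl : s < (B.sort (· ≤ ·)).length := by rwa [Finset.length_sort]
      have ha : (A.sort (· ≤ ·)).getD s 0 ≤ t := (sort_getD_le_iff A t hsrA).mpr hsA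
      have hb : (B.sort (· ≤ ·)).getD s 0 ≤ t := le_of_lt (lt_of_lt_of_le (h1 s hsl) ha)
      have : s + 1 ≤ cnt B t := (sort_getD_le_iff B t hsrB).mp hb
      omega
    · by_contra h
      push_neg at h
      set s := cnt A t with hs
      have hsB : s + 2 ≤ cnt B t := h
      have hsrB : s + 1 < B.card := lt_of_lt_of_le (by omega) (cnt_le_card B t)
      have hsrA : s < A.card := by omega
      have hsl : s + 1 < (B.sort (· ≤ ·)).length := by rwa [Finset.length_sort]
      have hb : (B.sort (· ≤ ·)).getD (s + 1) 0 ≤ t := (sort_getD_le_iff B t hsrB).mpr hsB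
      have ha : (A.sort (· ≤ ·)).getD s 0 ≤ t := le_of_lt (lt_of_lt_of_le (h2 s hsl) hb)
      have : s + 1 ≤ cnt A t := (sort_getD_le_iff A t hsrA).mp ha
      omega
  · intro h
    constructor
    · intro i hi
      have hiB : i < B.card := by rwa [Finset.length_sort] at hi
      have hiA : i < A.card := by omega
      set a := (A.sort (· ≤ ·)).getD i 0 with ha
      have h1 : i + 1 ≤ cnt A a := (sort_getD_le_iff A a hiA).mp le_rfl
      have h2 : i + 1 ≤ cnt B a := le_trans h1 ((h a).1)
      have h3 : (B.sort (· ≤ ·)).getD i 0 ≤ a := (sort_getD_le_iff B a hiB).mpr h2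
      refine lt_of_le_of_ne h3 ?_
      intro he
      exact Finset.disjoint_left.mp hd (he ▸ (sort_getD_mem A hiA)) (sort_getD_mem B hiB)
    · intro i hi
      have hiB : i + 1 < B.card := by rwa [Finset.length_sort] at hi
      have hiA : i < A.card := by omega
      set b := (B.sort (· ≤ ·)).getD (i + 1) 0 with hb
      have h1 : i + 2 ≤ cnt B b := (sort_getD_le_iff B b hiB).mp le_rfl
      have h2 : i + 1 ≤ cnt A b := by have := (h b).2; omega
      have h3 : (A.sort (· ≤ ·)).getD i 0 ≤ b := (sort_getD_le_iff A b hiA).mpr h2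
      refine lt_of_le_of_ne h3 ?_
      intro he
      exact Finset.disjoint_left.mp hd (sort_getD_mem A hiA) (he ▸ sort_getD_mem B hiB)

lemma cnt_sdiff_inter (X Y : Finset ℕ) (t : ℕ) :
    cnt X t = cnt (X \ Y) t + cnt (X ∩ Y) t := by
  rw [cnt, cnt, cnt, ← Finset.card_union_of_disjoint
      (Finset.disjoint_filter_filter (Finset.disjoint_sdiff_inter X Y)),
      ← Finset.filter_union, Finset.sdiff_union_inter]

lemma cnt_image_eq {k : ℕ} (x : Fin k → ℕ) (hinj : Function.Injective x) (t : ℕ) :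
    cnt (Finset.univ.image x) t = (Finset.univ.filter (fun j => x j ≤ t)).card := by
  rw [cnt, Finset.filter_image, Finset.card_image_of_injective _ hinj]

lemma cnt_image_le_iff {k : ℕ} (x : Fin k → ℕ) (hx : StrictMono x) (j : Fin k) (t : ℕ) :
    x j ≤ t ↔ (j : ℕ) + 1 ≤ cnt (Finset.univ.image x) t := by
  rw [cnt_image_eq x hx.injective]
  constructor
  · intro h
    have hsub : Finset.Iic j ⊆ Finset.univ.filter (fun j' => x j' ≤ t) := by
      intro j' hj'
      simp only [Finset.mem_Iic] at hj'
      simp only [Finset.mem_filter, Finset.mem_univ, true_and]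
      exact le_trans (hx.monotone hj') h
    calc (j : ℕ) + 1 = (Finset.Iic j).card := (Fin.card_Iic j).symm
      _ ≤ _ := Finset.card_le_card hsub
  · intro h
    by_contra hxt
    push_neg at hxt
    have hsub : Finset.univ.filter (fun j' => x j' ≤ t) ⊆ Finset.Iio j := by
      intro j' hj'
      simp only [Finset.mem_filter, Finset.mem_univ, true_and] at hj'
      simp only [Finset.mem_Iio]
      by_contra hjj
      push_neg at hjj
      exact absurd (le_trans (hx.monotone hjj) hj') (not_le.mpr hxt)
    have := Finset.card_le_card hsub
    rw [Fin.card_Iio] at this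
    omega

lemma rows_cnt_le {k : ℕ} (x y : Fin k → ℕ) (hx : StrictMono x) (hy : StrictMono y)
    (hxy : ∀ j, x j ≤ y j) (t : ℕ) :
    cnt (Finset.univ.image y) t ≤ cnt (Finset.univ.image x) t := by
  rw [cnt_image_eq x hx.injective, cnt_image_eq y hy.injective]
  apply Finset.card_le_card
  intro j hj
  simp only [Finset.mem_filter, Finset.mem_univ, true_and] at hj ⊢
  exact le_trans (hxy j) hj

lemma rows_cnt_can {k : ℕ} (x y : Fin k → ℕ) (hx : StrictMono x)
    (hcan : ∀ j j' : Fin k, (j : ℕ) + 1 = (j' : ℕ) → y j ≤ x j')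
    (hyinj : Function.Injective y) (t : ℕ) :
    cnt (Finset.univ.image x) t ≤ cnt (Finset.univ.image y) t + 1 := by
  rw [cnt_image_eq x hx.injective, cnt_image_eq y hyinj]
  set S := Finset.univ.filter (fun j => x j ≤ t) with hS
  set T := Finset.univ.filter (fun j => y j ≤ t) with hT
  rcases S.eq_empty_or_nonempty with h | h
  · simp [h]
  · set M := S.max' h with hM
    have hMS : M ∈ S := S.max'_mem h
    have hMx : x M ≤ t := by
      have := hMS; rw [hS, Finset.mem_filter] at this; exact this.2
    have hsub : S.erase M ⊆ T := by
      intro j hj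
      obtain ⟨hne, hjS⟩ := Finset.mem_erase.mp hj
      have hjM : j < M := lt_of_le_of_ne (S.le_max' j hjS) hne
      have hjM' : (j : ℕ) + 1 ≤ (M : ℕ) := hjM
      have hlt : (j : ℕ) + 1 < k := lt_of_le_of_lt hjM' M.isLt
      have h1 : y j ≤ x ⟨(j : ℕ) + 1, hlt⟩ := hcan j ⟨(j : ℕ) + 1, hlt⟩ rfl
      have h2 : x ⟨(j : ℕ) + 1, hlt⟩ ≤ x M := hx.monotone (by
        rw [Fin.le_def]; exact hjM')
      rw [hT, Finset.mem_filter]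
      exact ⟨Finset.mem_univ _, le_trans h1 (le_trans h2 hMx)⟩
    have h1 : (S.erase M).card + 1 = S.card := Finset.card_erase_add_one hMS
    have h2 : (S.erase M).card ≤ T.card := Finset.card_le_card hsub
    omega

lemma interlacing_symm {J1 J2 : Finset ℕ} (h : Interlacing J1 J2) : Interlacing J2 J1 :=
  ⟨h.1.symm, h.2.symm⟩

/-- Forward direction for two rows: if `x ≤ y` pointwise and `y j ≤ x (j+1)`,
then the images interlace. -/
lemma interlacing_of_dom {k : ℕ} (x y : Fin k → ℕ) (hx : StrictMono x) (hy : StrictMono y)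
    (hxy : ∀ j, x j ≤ y j)
    (hcan : ∀ j j' : Fin k, (j : ℕ) + 1 = (j' : ℕ) → y j ≤ x j') :
    Interlacing (Finset.univ.image x) (Finset.univ.image y) := by
  set X := Finset.univ.image x with hX
  set Y := Finset.univ.image y with hY
  have hXc : X.card = k := by
    rw [hX, Finset.card_image_of_injective _ hx.injective, Finset.card_univ, Fintype.card_fin]
  have hYc : Y.card = k := by
    rw [hY, Finset.card_image_of_injective _ hy.injective, Finset.card_univ, Fintype.card_fin]
  have e1 : (X \ Y).card + (X ∩ Y).card = X.card := Finset.card_sdiff_add_card_inter X Y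
  have e2 : (Y \ X).card + (Y ∩ X).card = Y.card := Finset.card_sdiff_add_card_inter Y X
  have e3 : (Y ∩ X).card = (X ∩ Y).card := by rw [Finset.inter_comm]
  have hcardeq : (X \ Y).card = (Y \ X).card := by omega
  refine ⟨hcardeq, Or.inl ?_⟩
  apply (altChain_iff (Y \ X) (X \ Y) disjoint_sdiff_sdiff hcardeq.symm).mpr
  intro t
  have f1 : cnt X t = cnt (X \ Y) t + cnt (X ∩ Y) t := cnt_sdiff_inter X Y t
  have f2 : cnt Y t = cnt (Y \ X) t + cnt (Y ∩ X) t := cnt_sdiff_inter Y X t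
  have f3 : cnt (Y ∩ X) t = cnt (X ∩ Y) t := by rw [Finset.inter_comm]
  have g1 : cnt Y t ≤ cnt X t := rows_cnt_le x y hx hy hxy t
  have g2 : cnt X t ≤ cnt Y t + 1 := rows_cnt_can x y hx hcan hy.injective t
  constructor <;> omega

/-- Converse direction for two rows. -/
lemma can_of_interlacing {k : ℕ} (x y : Fin k → ℕ) (hx : StrictMono x) (hy : StrictMono y)
    (hxy : ∀ j, x j ≤ y j)
    (hI : Interlacing (Finset.univ.image y) (Finset.univ.image x)) :
    ∀ j j' : Fin k, (j : ℕ) + 1 = (j' : ℕ) → y j ≤ x j' := by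
  set X := Finset.univ.image x with hX
  set Y := Finset.univ.image y with hY
  obtain ⟨hcard, hAB⟩ := hI
  have hdisj : Disjoint (Y \ X) (X \ Y) := disjoint_sdiff_sdiff
  have f1 : ∀ t, cnt X t = cnt (X \ Y) t + cnt (X ∩ Y) t := cnt_sdiff_inter X Y
  have f2 : ∀ t, cnt Y t = cnt (Y \ X) t + cnt (Y ∩ X) t := cnt_sdiff_inter Y X
  have f3 : ∀ t, cnt (Y ∩ X) t = cnt (X ∩ Y) t := by intro t; rw [Finset.inter_comm]
  have hg0 : ∀ t, cnt (Y \ X) t ≤ cnt (X \ Y) t := by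
    intro t
    have g1 : cnt Y t ≤ cnt X t := rows_cnt_le x y hx hy hxy t
    have := f1 t; have := f2 t; have := f3 t
    omega
  have key : ∀ t, cnt (X \ Y) t ≤ cnt (Y \ X) t + 1 := by
    rcases hAB with h | h
    · intro t
      have := ((altChain_iff (X \ Y) (Y \ X) hdisj.symm hcard.symm).mp h t).1
      have := hg0 t
      omega
    · intro t
      exact ((altChain_iff (Y \ X) (X \ Y) hdisj hcard).mp h t).2
  have key2 : ∀ t, cnt X t ≤ cnt Y t + 1 := by
    intro t
    have := f1 t; have := f2 t; have := f3 t; have := key t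
    omega
  intro j j' hjj
  have h1 : (j' : ℕ) + 1 ≤ cnt X (x j') := (cnt_image_le_iff x hx j' _).mp le_rfl
  have h2 : (j : ℕ) + 1 ≤ cnt Y (x j') := by
    have := key2 (x j'); omega
  exact (cnt_image_le_iff y hy j _).mpr h2

/-- A weakly column decreasing profile is canonical if and only if any two of
its rows are interlacing. Rows of the `m × k` array `P` (entries in `{1,…,n}`,
rows strictly increasing, row `0` the top row) are regarded as `k`-element
subsets of `{1,…,n}`; given weak column decrease, `P` being canonical amounts
to the extra condition `P_{m,j} ≥ P_{1,j−1}` for `2 ≤ j ≤ k`. -/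
theorem canonical_iff_interlacing (n k m : ℕ) (hn : 1 ≤ n) (hk : 1 ≤ k) (hm : 1 ≤ m)
    (P : Fin m → Fin k → ℕ)
    (hrange : ∀ i j, 1 ≤ P i j ∧ P i j ≤ n)
    (hrows : ∀ i, StrictMono (P i))
    (hwcd : ∀ (i i' : Fin m) (j : Fin k), (i : ℕ) + 1 = (i' : ℕ) → P i' j ≤ P i j) :
    ((∀ j j' : Fin k, (j : ℕ) + 1 = (j' : ℕ) → P ⟨0, by omega⟩ j ≤ P ⟨m - 1, by omega⟩ j') ↔
      ∀ i i' : Fin m, Interlacing (Finset.univ.image (P i)) (Finset.univ.image (P i'))) := by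
  have hchain : ∀ a b : Fin m, (a : ℕ) ≤ (b : ℕ) → ∀ j, P b j ≤ P a j := by
    intro a b hab j
    obtain ⟨d, hd⟩ : ∃ d, (b : ℕ) = (a : ℕ) + d := ⟨(b : ℕ) - (a : ℕ), by omega⟩
    clear hab
    induction d generalizing b with
    | zero =>
      have : b = a := Fin.val_injective (by omega)
      rw [this]
    | succ d ih =>
      have hb' : (a : ℕ) + d < m := by have := b.isLt; omega
      set b' : Fin m := ⟨(a : ℕ) + d, hb'⟩ with hb'def
      have h1 : P b' j ≤ P a j := ih b' rfl
      have h2 : P b j ≤ P b' j := hwcd b' b j (by simp [hb'def]; omega)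
      exact le_trans h2 h1
  constructor
  · intro hcan i i'
    have hcan' : ∀ (a b : Fin m) (j j' : Fin k), (j : ℕ) + 1 = (j' : ℕ) → P a j ≤ P b j' := by
      intro a b j j' hj
      calc P a j ≤ P ⟨0, by omega⟩ j := hchain ⟨0, by omega⟩ a (by simp) j
        _ ≤ P ⟨m - 1, by omega⟩ j' := hcan j j' hj
        _ ≤ P b j' := hchain b ⟨m - 1, by omega⟩ (by have := b.isLt; simp; omega) j'
    rcases le_total (i : ℕ) (i' : ℕ) with h | h
    · exact interlacing_symm (interlacing_of_dom (P i') (P i) (hrows i') (hrows i)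
        (fun j => hchain i i' h j) (fun j j' hj => hcan' i i' j j' hj))
    · exact interlacing_of_dom (P i) (P i') (hrows i) (hrows i')
        (fun j => hchain i' i h j) (fun j j' hj => hcan' i' i j j' hj)
  · intro hI j j' hj
    exact can_of_interlacing (P ⟨m - 1, by omega⟩) (P ⟨0, by omega⟩)
      (hrows _) (hrows _)
      (fun j => hchain ⟨0, by omega⟩ ⟨m - 1, by omega⟩ (by simp) j)
      (hI ⟨0, by omega⟩ ⟨m - 1, by omega⟩) j j' hj

end GCC
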